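/- The E7 projective configuration of 63 lines is saturated: every set of mutually orthogonal lines in the configuration is contained in a set of 7 mutually orthogonal lines of the configuration. -/

import Mathlib

/-- The projective line (ray) spanned by a vector in `ℝ⁸`. -/
def ray8 (v : Fin 8 → ℝ) : Submodule ℝ (Fin 8 → ℝ) := Submodule.span ℝ {v}

/-- Orthogonality of subspaces of `ℝ⁸` with respect to the standard inner product. -/
def Perp8 (L M : Submodule ℝ (Fin 8 → ℝ)) : Prop :=
  ∀ x ∈ L, ∀ y ∈ M, ∑ i, x i * y i = 0

/-- The `E7` root system, modeled in the hyperplane `{Σ aᵢ = 0} ⊂ ℝ⁸` as the union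
of the `S₈`-orbits of `(1,−1,0,0,0,0,0,0)` and `(1/2)(1,1,1,1,−1,−1,−1,−1)`. -/
def E7roots : Set (Fin 8 → ℝ) :=
  {v | ∃ σ : Equiv.Perm (Fin 8),
    v = ![1, -1, 0, 0, 0, 0, 0, 0] ∘ σ ∨
    v = ((1 : ℝ) / 2) • (![1, 1, 1, 1, -1, -1, -1, -1] ∘ σ)}

/-- The 63 projective lines of the `E7` configuration. -/
def E7lines : Set (Submodule ℝ (Fin 8 → ℝ)) := ray8 '' E7roots


def rZ : Fin 63 → Fin 8 → ℤ :=
  ![![1, -1, 0, 0, 0, 0, 0, 0],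
    ![1, 0, -1, 0, 0, 0, 0, 0],
    ![1, 0, 0, -1, 0, 0, 0, 0],
    ![1, 0, 0, 0, -1, 0, 0, 0],
    ![1, 0, 0, 0, 0, -1, 0, 0],
    ![1, 0, 0, 0, 0, 0, -1, 0],
    ![1, 0, 0, 0, 0, 0, 0, -1],
    ![0, 1, -1, 0, 0, 0, 0, 0],
    ![0, 1, 0, -1, 0, 0, 0, 0],
    ![0, 1, 0, 0, -1, 0, 0, 0],
    ![0, 1, 0, 0, 0, -1, 0, 0],
    ![0, 1, 0, 0, 0, 0, -1, 0],
    ![0, 1, 0, 0, 0, 0, 0, -1],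
    ![0, 0, 1, -1, 0, 0, 0, 0],
    ![0, 0, 1, 0, -1, 0, 0, 0],
    ![0, 0, 1, 0, 0, -1, 0, 0],
    ![0, 0, 1, 0, 0, 0, -1, 0],
    ![0, 0, 1, 0, 0, 0, 0, -1],
    ![0, 0, 0, 1, -1, 0, 0, 0],
    ![0, 0, 0, 1, 0, -1, 0, 0],
    ![0, 0, 0, 1, 0, 0, -1, 0],
    ![0, 0, 0, 1, 0, 0, 0, -1],
    ![0, 0, 0, 0, 1, -1, 0, 0],
    ![0, 0, 0, 0, 1, 0, -1, 0],
    ![0, 0, 0, 0, 1, 0, 0, -1],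
    ![0, 0, 0, 0, 0, 1, -1, 0],
    ![0, 0, 0, 0, 0, 1, 0, -1],
    ![0, 0, 0, 0, 0, 0, 1, -1],
    ![1, 1, 1, 1, -1, -1, -1, -1],
    ![1, 1, 1, -1, 1, -1, -1, -1],
    ![1, 1, 1, -1, -1, 1, -1, -1],
    ![1, 1, 1, -1, -1, -1, 1, -1],
    ![1, 1, 1, -1, -1, -1, -1, 1],
    ![1, 1, -1, 1, 1, -1, -1, -1],
    ![1, 1, -1, 1, -1, 1, -1, -1],
    ![1, 1, -1, 1, -1, -1, 1, -1],
    ![1, 1, -1, 1, -1, -1, -1, 1],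
    ![1, 1, -1, -1, 1, 1, -1, -1],
    ![1, 1, -1, -1, 1, -1, 1, -1],
    ![1, 1, -1, -1, 1, -1, -1, 1],
    ![1, 1, -1, -1, -1, 1, 1, -1],
    ![1, 1, -1, -1, -1, 1, -1, 1],
    ![1, 1, -1, -1, -1, -1, 1, 1],
    ![1, -1, 1, 1, 1, -1, -1, -1],
    ![1, -1, 1, 1, -1, 1, -1, -1],
    ![1, -1, 1, 1, -1, -1, 1, -1],
    ![1, -1, 1, 1, -1, -1, -1, 1],
    ![1, -1, 1, -1, 1, 1, -1, -1],
    ![1, -1, 1, -1, 1, -1, 1, -1],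
    ![1, -1, 1, -1, 1, -1, -1, 1],
    ![1, -1, 1, -1, -1, 1, 1, -1],
    ![1, -1, 1, -1, -1, 1, -1, 1],
    ![1, -1, 1, -1, -1, -1, 1, 1],
    ![1, -1, -1, 1, 1, 1, -1, -1],
    ![1, -1, -1, 1, 1, -1, 1, -1],
    ![1, -1, -1, 1, 1, -1, -1, 1],
    ![1, -1, -1, 1, -1, 1, 1, -1],
    ![1, -1, -1, 1, -1, 1, -1, 1],
    ![1, -1, -1, 1, -1, -1, 1, 1],
    ![1, -1, -1, -1, 1, 1, 1, -1],
    ![1, -1, -1, -1, 1, 1, -1, 1],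
    ![1, -1, -1, -1, 1, -1, 1, 1],
    ![1, -1, -1, -1, -1, 1, 1, 1]]

def mask : Fin 63 → Nat :=
  ![8796093014016,
    8998411751399168,
    567585623825964672,
    4099270590856936832,
    6569787740491578240,
    7878244116561065856,
    8546220831521238912,
    9214364846189707388,
    8655777875699679354,
    5124094592781361270,
    2653582409051103342,
    1345130742269534302,
    677156849016758334,
    8647051885133438585,
    5117090952820301173,
    2651657945874701165,
    1348021830785177437,
    682930238545203005,
    4682634221574135027,
    2536393854324792043,
    1534217471505127131,
    1046455179018358459,
    2031374367961856487,
    3047057149330634199,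
    3568594235627777463,
    5298002908181590991,
    5929316884688497583,
    7219441891581683615,
    576328673733386631,
    4106287922636407435,
    6571715964985181331,
    7875347373720668323,
    8540436150523662531,
    4540744436443218701,
    6686979863255663893,
    7689151588041148709,
    8176911161730650437,
    7191998026191414809,
    6176310947576719913,
    5654771864058835529,
    3925362696494935089,
    3294049196743947345,
    2003926077546494049,
    4547510813820484622,
    6688693426357582358,
    7686102324469642790,
    8171085047183584838,
    7192358313817856282,
    6172277483659416874,
    5648699699425332554,
    3918780856682255154,
    3287959457104300882,
    1999769588586186594,
    7210091309825988764,
    5915150132698322092,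
    5267441819312295116,
    3502057177820582580,
    2906701560885627604,
    1742642124885640932,
    475761494053761464,
    384315973153401304,
    228816322568955368,
    64159792587105264]

def dotZ (x y : Fin 8 → ℤ) : ℤ := ∑ i, x i * y i
def adjB (i j : Fin 63) : Bool := dotZ (rZ i) (rZ j) == 0

def EZ (a b : Fin 8) : Fin 8 → ℤ := fun j => if j = a then 1 else if j = b then -1 else 0
def WZ (s : Fin 8 → Bool) : Fin 8 → ℤ := fun j => if s j then 1 else -1
def ER (a b : Fin 8) : Fin 8 → ℝ := fun j => if j = a then 1 else if j = b then -1 else 0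
def WR (s : Fin 8 → Bool) : Fin 8 → ℝ := fun j => if s j then 1 else -1
def RV (i : Fin 63) : Fin 8 → ℝ := fun j => ((rZ i j : ℤ) : ℝ)
def lineOf (i : Fin 63) : Submodule ℝ (Fin 8 → ℝ) := ray8 (RV i)

set_option maxRecDepth 100000
set_option maxHeartbeats 3000000

theorem Dec1 : ∀ a b : Fin 8, a ≠ b → ∃ i : Fin 63, rZ i = EZ a b ∨ rZ i = -EZ a b := by decide

set_option maxHeartbeats 3000000 in
theorem Dec2 : ∀ s : Fin 8 → Bool, (Finset.univ.filter fun j => s j = true).card = 4 →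
    ∃ i : Fin 63, rZ i = WZ s ∨ rZ i = -WZ s := by decide

set_option maxHeartbeats 3000000 in
theorem Dec3 : ∀ i : Fin 63, (∃ a b, a ≠ b ∧ rZ i = EZ a b) ∨
    (∃ s, (Finset.univ.filter fun j => s j = true).card = 4 ∧ rZ i = WZ s) := by decide

theorem rz_nonprop : ∀ i j : Fin 63,
    dotZ (rZ i) (rZ j) ^ 2 = dotZ (rZ i) (rZ i) * dotZ (rZ j) (rZ j) → i = j := by decide

-- basic span lemmas
theorem mem_ray8 {x v : Fin 8 → ℝ} : x ∈ ray8 v ↔ ∃ c : ℝ, c • v = x :=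
  Submodule.mem_span_singleton

theorem ray8_smul {c : ℝ} (hc : c ≠ 0) (v : Fin 8 → ℝ) : ray8 (c • v) = ray8 v :=
  Submodule.span_singleton_smul_eq (isUnit_iff_ne_zero.mpr hc) v

theorem dot_smul_smul (v w : Fin 8 → ℝ) (c d : ℝ) :
    ∑ k, (c • v) k * (d • w) k = c * d * ∑ k, v k * w k := by
  rw [Finset.mul_sum]
  exact Finset.sum_congr rfl fun k _ => by simp [smul_eq_mul]; ring

theorem cast_dot (i j : Fin 63) :
    ((dotZ (rZ i) (rZ j) : ℤ) : ℝ) = ∑ k, RV i k * RV j k := by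
  simp [dotZ, RV]

theorem perp_of_adj {i j : Fin 63} (h : adjB i j = true) :
    Perp8 (lineOf i) (lineOf j) := by
  intro x hx y hy
  obtain ⟨c, rfl⟩ := mem_ray8.mp hx
  obtain ⟨d, rfl⟩ := mem_ray8.mp hy
  rw [dot_smul_smul, ← cast_dot]
  have : dotZ (rZ i) (rZ j) = 0 := by simpa [adjB] using h
  rw [this]; simp

theorem adj_of_perp {i j : Fin 63} (h : Perp8 (lineOf i) (lineOf j)) :
    adjB i j = true := by
  have h1 := h (RV i) (Submodule.mem_span_singleton_self _) (RV j)
    (Submodule.mem_span_singleton_self _)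
  rw [← cast_dot] at h1
  simp only [adjB, beq_iff_eq]
  exact_mod_cast h1

theorem lineOf_injective : Function.Injective lineOf := by
  intro i j h
  have hj : RV j ∈ lineOf i := by
    rw [h]; exact Submodule.mem_span_singleton_self _
  obtain ⟨c, hc⟩ := mem_ray8.mp hj
  apply rz_nonprop
  have h1 : ((dotZ (rZ i) (rZ j) : ℤ) : ℝ) = c * ((dotZ (rZ i) (rZ i) : ℤ) : ℝ) := by
    rw [cast_dot, cast_dot, ← hc, Finset.mul_sum]
    exact Finset.sum_congr rfl fun k _ => by simp [smul_eq_mul]; ring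
  have h2 : ((dotZ (rZ j) (rZ j) : ℤ) : ℝ) = c * c * ((dotZ (rZ i) (rZ i) : ℤ) : ℝ) := by
    rw [cast_dot, ← hc, dot_smul_smul, ← cast_dot]
  have : ((dotZ (rZ i) (rZ j) : ℤ) : ℝ) ^ 2 =
      ((dotZ (rZ i) (rZ i) : ℤ) : ℝ) * ((dotZ (rZ j) (rZ j) : ℤ) : ℝ) := by
    rw [h1, h2]; ring
  exact_mod_cast this

-- base vector value lemmas
theorem base1_apply (k : Fin 8) :
    (![1, -1, 0, 0, 0, 0, 0, 0] : Fin 8 → ℝ) k = if k = 0 then 1 else if k = 1 then -1 else 0 := by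
  fin_cases k <;> rfl

theorem base2_apply (k : Fin 8) :
    (![1, 1, 1, 1, -1, -1, -1, -1] : Fin 8 → ℝ) k = if (k : ℕ) < 4 then 1 else -1 := by
  fin_cases k <;> rfl

theorem base1_eq (σ : Equiv.Perm (Fin 8)) (a b : Fin 8) (ha : σ a = 0) (hb : σ b = 1) :
    (![1, -1, 0, 0, 0, 0, 0, 0] ∘ σ : Fin 8 → ℝ) = ER a b := by
  funext j
  simp only [Function.comp_apply, base1_apply, ER]
  have e0 : σ j = 0 ↔ j = a := by rw [← ha, EmbeddingLike.apply_eq_iff_eq]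
  have e1 : σ j = 1 ↔ j = b := by rw [← hb, EmbeddingLike.apply_eq_iff_eq]
  by_cases hja : j = a
  · subst hja; simp [ha]
  · have h0 : σ j ≠ 0 := fun hh => hja (e0.mp hh)
    by_cases hjb : j = b
    · subst hjb
      rw [if_neg h0, if_pos hb, if_neg hja, if_pos rfl]
    · have h1 : σ j ≠ 1 := fun hh => hjb (e1.mp hh)
      rw [if_neg h0, if_neg h1, if_neg hja, if_neg hjb]

theorem base2_eq (σ : Equiv.Perm (Fin 8)) (s : Fin 8 → Bool)
    (hs : ∀ j, s j = decide ((σ j : ℕ) < 4)) :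
    (![1, 1, 1, 1, -1, -1, -1, -1] ∘ σ : Fin 8 → ℝ) = WR s := by
  funext j
  simp only [Function.comp_apply, base2_apply, WR, hs j]
  by_cases h : ((σ j : ℕ) < 4) <;> simp [h]

-- cast lemmas
theorem castE (i : Fin 63) (a b : Fin 8) (h : rZ i = EZ a b) : RV i = ER a b := by
  funext j; simp only [RV, h, EZ, ER]; split_ifs <;> norm_num

theorem castEneg (i : Fin 63) (a b : Fin 8) (h : rZ i = -EZ a b) : RV i = (-1 : ℝ) • ER a b := by
  funext j; simp only [RV, h, EZ, ER, Pi.neg_apply, Pi.smul_apply, smul_eq_mul]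
  split_ifs <;> norm_num

theorem castW (i : Fin 63) (s : Fin 8 → Bool) (h : rZ i = WZ s) : RV i = WR s := by
  funext j; simp only [RV, h, WZ, WR]; split_ifs <;> norm_num

theorem castWneg (i : Fin 63) (s : Fin 8 → Bool) (h : rZ i = -WZ s) :
    RV i = (-1 : ℝ) • WR s := by
  funext j; simp only [RV, h, WZ, WR, Pi.neg_apply, Pi.smul_apply, smul_eq_mul]
  split_ifs <;> norm_num

-- permutation construction
theorem permE (a b : Fin 8) (hab : a ≠ b) : ∃ σ : Equiv.Perm (Fin 8), σ a = 0 ∧ σ b = 1 := by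
  refine ⟨(Equiv.swap a 0).trans (Equiv.swap (Equiv.swap a 0 b) 1), ?_, ?_⟩
  · simp only [Equiv.trans_apply, Equiv.swap_apply_left]
    have h1 : (0 : Fin 8) ≠ Equiv.swap a 0 b := by
      intro hh
      have hba : b = a :=
        Equiv.injective _ (hh.symm.trans (Equiv.swap_apply_left a 0).symm)
      exact hab hba.symm
    exact Equiv.swap_apply_of_ne_of_ne h1 (by decide)
  · simp only [Equiv.trans_apply, Equiv.swap_apply_left]

theorem permW (s : Fin 8 → Bool) (hs : (Finset.univ.filter fun j => s j = true).card = 4) :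
    ∃ σ : Equiv.Perm (Fin 8), ∀ j, s j = decide ((σ j : ℕ) < 4) := by
  have c1 : Fintype.card {j : Fin 8 // s j = true} = 4 := by
    rw [Fintype.card_subtype]; exact hs
  have c2 : Fintype.card {k : Fin 8 // (k : ℕ) < 4} = 4 := by
    rw [Fintype.card_subtype]; decide
  have c3 : Fintype.card {j : Fin 8 // ¬ s j = true} =
      Fintype.card {k : Fin 8 // ¬ (k : ℕ) < 4} := by
    rw [Fintype.card_subtype_compl, Fintype.card_subtype_compl, c1, c2]
  have e := Fintype.equivOfCardEq (c1.trans c2.symm)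
  have f := Fintype.equivOfCardEq c3
  refine ⟨Equiv.subtypeCongr e f, fun j => ?_⟩
  by_cases h : s j = true
  · have : Equiv.subtypeCongr e f j = (e ⟨j, h⟩ : Fin 8) := by
      simp [Equiv.subtypeCongr, h]
    rw [this, h]
    exact (decide_eq_true (e ⟨j, h⟩).2).symm
  · have h' : ¬ s j = true := by simp [h]
    have hj : Equiv.subtypeCongr e f j = (f ⟨j, h'⟩ : Fin 8) := by
      simp [Equiv.subtypeCongr, h']
    rw [hj, Bool.eq_false_iff.mpr (fun ht => h ht)]
    exact (decide_eq_false (f ⟨j, h'⟩).2).symm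

-- membership of rep lines
theorem lineE_mem (a b : Fin 8) (hab : a ≠ b) : ray8 (ER a b) ∈ E7lines := by
  obtain ⟨σ, ha, hb⟩ := permE a b hab
  exact ⟨![1, -1, 0, 0, 0, 0, 0, 0] ∘ σ, ⟨σ, Or.inl rfl⟩,
    by rw [base1_eq σ a b ha hb]⟩

theorem lineW_mem (s : Fin 8 → Bool) (hs : (Finset.univ.filter fun j => s j = true).card = 4) :
    ray8 (WR s) ∈ E7lines := by
  obtain ⟨σ, hσ⟩ := permW s hs
  refine ⟨((1 : ℝ) / 2) • (![1, 1, 1, 1, -1, -1, -1, -1] ∘ σ), ⟨σ, Or.inr rfl⟩, ?_⟩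
  rw [base2_eq σ s hσ, ray8_smul (by norm_num)]

theorem card4 (σ : Equiv.Perm (Fin 8)) :
    (Finset.univ.filter fun j => (fun j => decide ((σ j : ℕ) < 4)) j = true).card = 4 := by
  have : (Finset.univ.filter fun j : Fin 8 => (fun j => decide ((σ j : ℕ) < 4)) j = true).card =
      (Finset.univ.filter fun k : Fin 8 => (k : ℕ) < 4).card := by
    apply Finset.card_bij (fun j _ => σ j)
    · intro a ha
      simp only [Finset.mem_filter, Finset.mem_univ, true_and, decide_eq_true_eq] at ha ⊢
      exact ha
    · intro a _ b _ hab
      exact Equiv.injective σ hab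
    · intro k hk
      simp only [Finset.mem_filter, Finset.mem_univ, true_and, decide_eq_true_eq] at hk ⊢
      exact ⟨σ.symm k, by simp [hk], by simp⟩
  rw [this]; decide

theorem lines_eq : E7lines = Set.range lineOf := by
  ext L
  constructor
  · rintro ⟨v, ⟨σ, hv | hv⟩, rfl⟩
    · set a := σ.symm 0 with ha
      set b := σ.symm 1 with hb
      have hab : a ≠ b := fun h => absurd (σ.symm.injective h) (by decide)
      have hva : σ a = 0 := by simp [ha]
      have hvb : σ b = 1 := by simp [hb]
      obtain ⟨i, hi | hi⟩ := Dec1 a b hab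
      · exact ⟨i, by rw [lineOf, castE i a b hi, ← base1_eq σ a b hva hvb, ← hv]⟩
      · refine ⟨i, ?_⟩
        rw [lineOf, castEneg i a b hi, ray8_smul (by norm_num), ← base1_eq σ a b hva hvb, ← hv]
    · set s : Fin 8 → Bool := fun j => decide ((σ j : ℕ) < 4) with hsdef
      have hcard := card4 σ
      have hbw : (![1, 1, 1, 1, -1, -1, -1, -1] ∘ σ : Fin 8 → ℝ) = WR s :=
        base2_eq σ s (fun j => rfl)
      have hv' : ray8 v = ray8 (WR s) := by
        rw [hv, ← hbw, ray8_smul (by norm_num)]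
      obtain ⟨i, hi | hi⟩ := Dec2 s hcard
      · exact ⟨i, by rw [lineOf, castW i s hi, ← hv']⟩
      · refine ⟨i, ?_⟩
        rw [lineOf, castWneg i s hi, ray8_smul (by norm_num), ← hv']
  · rintro ⟨i, rfl⟩
    rcases Dec3 i with ⟨a, b, hab, hi⟩ | ⟨s, hs, hi⟩
    · rw [lineOf, castE i a b hi]; exact lineE_mem a b hab
    · rw [lineOf, castW i s hi]; exact lineW_mem s hs

theorem mask_spec : ∀ i j : Fin 63, (mask i).testBit j.val = adjB i j := by decide

theorem adjB_symm : ∀ i j : Fin 63, adjB i j = adjB j i := by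
  intro i j
  simp only [adjB, dotZ, decide_eq_decide, beq_iff_eq]
  rw [Finset.sum_congr rfl (fun k _ => mul_comm (rZ i k) (rZ j k))]

theorem adjB_irrefl : ∀ i : Fin 63, adjB i i = false := by decide

def cliqueMask (S : List (Fin 63)) : Nat := S.foldr (fun i m => m &&& mask i) (2^63 - 1)

def extOK (S : List (Fin 63)) : Bool := cliqueMask S != 0

def dfs : Nat → List (Fin 63) → List (Fin 63) → Bool
  | 0, _, _ => false
  | fuel+1, S, cand =>
    ((S.length == 7 || extOK S) && S.length ≤ 7) &&
      cand.all (fun v => dfs fuel (v :: S)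
        (cand.filter (fun w => decide (v < w) && (mask v).testBit w.val)))

theorem dfs_true : dfs 64 [] (List.finRange 63) = true := by decide

theorem testBit_cliqueMask (S : List (Fin 63)) (n : ℕ) :
    (cliqueMask S).testBit n = ((2^63 - 1 : ℕ).testBit n && S.all fun i => (mask i).testBit n) := by
  induction S with
  | nil => simp [cliqueMask]
  | cons i S ih =>
    simp only [cliqueMask, List.foldr_cons, Nat.testBit_land, List.all_cons] at *
    rw [ih]; ring_nf; rw [Bool.and_comm ((mask i).testBit n), Bool.and_assoc]

theorem extOK_sound {S : List (Fin 63)} (h : extOK S = true) :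
    ∃ j : Fin 63, ∀ s ∈ S, adjB s j = true := by
  have hne : cliqueMask S ≠ 0 := by simpa [extOK] using h
  obtain ⟨n, hn⟩ := Nat.exists_testBit_of_ne_zero hne
  rw [testBit_cliqueMask] at hn
  have h1 : (2^63 - 1 : ℕ).testBit n = true := (Bool.and_eq_true_iff.mp hn).1
  have h2 : ∀ s ∈ S, (mask s).testBit n = true := by
    simpa using (Bool.and_eq_true_iff.mp hn).2
  have hlt : n < 63 := by
    by_contra hc
    push_neg at hc
    have : (2^63 - 1 : ℕ) < 2^n := lt_of_lt_of_le (by norm_num) (Nat.pow_le_pow_right (by norm_num) hc)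
    rw [Nat.testBit_lt_two_pow this] at h1
    exact Bool.false_ne_true h1
  refine ⟨⟨n, hlt⟩, fun s hs => ?_⟩
  rw [← mask_spec]; exact h2 s hs

theorem dfs_sound : ∀ (fuel : ℕ) (cand S T : List (Fin 63)),
    dfs fuel S cand = true →
    T.Pairwise (· < ·) → T.Pairwise (fun a b => adjB a b = true) →
    (∀ t ∈ T, t ∈ cand ∧ ∀ s ∈ S, adjB s t = true) →
    T.length + S.length ≤ 7 ∧
      (T.length + S.length = 7 ∨
        ∃ j : Fin 63, (∀ s ∈ S, adjB s j = true) ∧ (∀ t ∈ T, adjB t j = true)) := by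
  intro fuel
  induction fuel with
  | zero => intro cand S T h; simp [dfs] at h
  | succ fuel ih =>
    intro cand S T h hlt hadj hmem
    simp only [dfs, Bool.and_eq_true, List.all_eq_true, beq_iff_eq, decide_eq_true_eq,
      Bool.or_eq_true] at h
    obtain ⟨⟨hbase, hlen⟩, hrec⟩ := h
    cases T with
    | nil =>
      refine ⟨by simpa using hlen, ?_⟩
      rcases hbase with h7 | hext
      · left; simpa using h7
      · right
        obtain ⟨j, hj⟩ := extOK_sound hext
        exact ⟨j, hj, by simp⟩
    | cons v T' =>
      have hvc := (hmem v (by simp)).1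
      have hdfs := hrec v hvc
      have hlt' := (List.pairwise_cons.mp hlt).2
      have hadj' := (List.pairwise_cons.mp hadj).2
      have hvltT := (List.pairwise_cons.mp hlt).1
      have hvadjT := (List.pairwise_cons.mp hadj).1
      have hmem' : ∀ t ∈ T', t ∈ cand.filter (fun w => decide (v < w) && (mask v).testBit w.val) ∧
          ∀ s ∈ v :: S, adjB s t = true := by
        intro t ht
        have h1 := hmem t (by simp [ht])
        refine ⟨?_, ?_⟩
        · rw [List.mem_filter]
          refine ⟨h1.1, ?_⟩
          simp only [Bool.and_eq_true, decide_eq_true_eq]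
          exact ⟨hvltT t ht, by rw [mask_spec]; exact hvadjT t ht⟩
        · intro s hs
          rcases List.mem_cons.mp hs with rfl | hs'
          · exact hvadjT t ht
          · exact h1.2 s hs'
      have := ih _ (v :: S) T' hdfs hlt' hadj' hmem'
      simp only [List.length_cons] at *
      constructor
      · omega
      · rcases this.2 with h7 | ⟨j, hjS, hjT⟩
        · left; omega
        · right
          refine ⟨j, fun s hs => hjS s (by simp [hs]), fun t ht => ?_⟩
          rcases List.mem_cons.mp ht with rfl | ht'
          · exact hjS t (by simp)
          · exact hjT t ht'

/-- Finset-level consequence. -/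
theorem clique_main (F : Finset (Fin 63))
    (hF : ∀ i ∈ F, ∀ j ∈ F, i ≠ j → adjB i j = true) :
    F.card ≤ 7 ∧ (F.card = 7 ∨ ∃ j, j ∉ F ∧ ∀ i ∈ F, adjB i j = true) := by
  set T := F.sort (· ≤ ·) with hT
  have hsorted : T.Pairwise (· ≤ ·) := F.pairwise_sort _
  have hnodup : T.Nodup := F.sort_nodup _
  have hmemT : ∀ a, a ∈ T ↔ a ∈ F := fun a => F.mem_sort _
  have hlen : T.length = F.card := F.length_sort _
  have hltP : T.Pairwise (· < ·) := by
    have := (hsorted.and hnodup).imp fun h => lt_of_le_of_ne h.1 h.2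
    exact this
  have hadjP : T.Pairwise (fun a b => adjB a b = true) :=
    hltP.imp_of_mem (fun {a b} ha hb hab =>
      hF a ((hmemT a).mp ha) b ((hmemT b).mp hb) (ne_of_lt hab))
  have := dfs_sound 64 (List.finRange 63) [] T dfs_true hltP hadjP
    (fun t _ => ⟨List.mem_finRange t, by simp⟩)
  simp only [List.length_nil, Nat.add_zero, hlen] at this
  refine ⟨this.1, ?_⟩
  rcases this.2 with h7 | ⟨j, _, hjT⟩
  · exact Or.inl h7
  · refine Or.inr ⟨j, ?_, fun i hi => hjT i ((hmemT i).mpr hi)⟩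
    intro hjF
    have := hjT j ((hmemT j).mpr hjF)
    rw [adjB_irrefl] at this
    exact Bool.false_ne_true this

theorem clique_extend (F : Finset (Fin 63))
    (hF : ∀ i ∈ F, ∀ j ∈ F, i ≠ j → adjB i j = true) :
    ∃ G : Finset (Fin 63), F ⊆ G ∧ G.card = 7 ∧
      ∀ i ∈ G, ∀ j ∈ G, i ≠ j → adjB i j = true := by
  have hcard := (clique_main F hF).1
  obtain ⟨n, hn⟩ : ∃ n, 7 - F.card = n := ⟨_, rfl⟩
  induction n generalizing F with
  | zero => exact ⟨F, subset_rfl, by omega, hF⟩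
  | succ n ih =>
    rcases (clique_main F hF).2 with h7 | ⟨j, hjF, hj⟩
    · exact ⟨F, subset_rfl, h7, hF⟩
    · have hF' : ∀ a ∈ insert j F, ∀ b ∈ insert j F, a ≠ b → adjB a b = true := by
        intro a ha b hb hab
        rcases Finset.mem_insert.mp ha with rfl | ha' <;>
          rcases Finset.mem_insert.mp hb with rfl | hb'
        · exact absurd rfl hab
        · rw [adjB_symm]; exact hj b hb'
        · exact hj a ha'
        · exact hF a ha' b hb' hab
      have hcard' := (clique_main _ hF').1
      obtain ⟨G, hsub, h7, hG⟩ := ih (insert j F) hF' hcard'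
        (by rw [Finset.card_insert_of_notMem hjF]; omega)
      exact ⟨G, subset_trans (Finset.subset_insert j F) hsub, h7, hG⟩

theorem perm_clique {G : Finset (Fin 63)}
    (hG : ∀ i ∈ G, ∀ j ∈ G, i ≠ j → adjB i j = true) :
    (lineOf '' ↑G).Pairwise Perp8 := by
  rintro L1 ⟨i, hi, rfl⟩ L2 ⟨j, hj, rfl⟩ hne
  have hij : i ≠ j := fun h => hne (by rw [h])
  exact perp_of_adj (hG i hi j hj hij)


/-- the `E7` configuration is saturated: every set of mutually
orthogonal lines of the configuration is contained in a set of 7 mutually orthogonal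
lines of the configuration. -/
theorem stmt_10 :
    ∀ U ⊆ E7lines, U.Pairwise Perp8 →
      ∃ M, U ⊆ M ∧ M ⊆ E7lines ∧ M.ncard = 7 ∧ M.Pairwise Perp8 := by
  intro U hU hP
  set T : Set (Fin 63) := {i | lineOf i ∈ U} with hTdef
  have hUT : U = lineOf '' T := by
    ext L
    constructor
    · intro hL
      have : L ∈ Set.range lineOf := lines_eq ▸ hU hL
      obtain ⟨i, rfl⟩ := this
      exact ⟨i, hL, rfl⟩
    · rintro ⟨i, hi, rfl⟩; exact hi
  set F : Finset (Fin 63) := (Set.toFinite T).toFinset with hFdef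
  have hFT : ↑F = T := Set.Finite.coe_toFinset _
  have hFclique : ∀ i ∈ F, ∀ j ∈ F, i ≠ j → adjB i j = true := by
    intro i hi j hj hij
    have hiT : lineOf i ∈ U := by
      have : i ∈ T := hFT ▸ (by exact_mod_cast hi)
      exact this
    have hjT : lineOf j ∈ U := by
      have : j ∈ T := hFT ▸ (by exact_mod_cast hj)
      exact this
    have hne : lineOf i ≠ lineOf j := fun h => hij (lineOf_injective h)
    exact adj_of_perp (hP hiT hjT hne)
  obtain ⟨G, hFG, hG7, hGclique⟩ := clique_extend F hFclique
  refine ⟨lineOf '' ↑G, ?_, ?_, ?_, perm_clique hGclique⟩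
  · rw [hUT, ← hFT]
    exact Set.image_mono (by exact_mod_cast hFG)
  · rintro L ⟨i, _, rfl⟩
    rw [lines_eq]
    exact Set.mem_range_self i
  · rw [Set.ncard_image_of_injective _ lineOf_injective, Set.ncard_coe_finset, hG7]
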